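/- Suppose L : ℝ^M × ℝ^M → ℝ is continuously differentiable, periodic in the sense that L(x+α, y+α) = L(x,y) for all α ∈ ℤ^M, and coercive: L(x,y) → +∞ as |x-y| → ∞. Then there exists a nondecreasing function b : ℝ≥0 → ℝ≥0 such that for all x, y ∈ ℝ^M, |∂_x L(x,y)|² ≤ b(|L(x,y)|). -/

import Mathlib

/-- If L : ℝ^M × ℝ^M → ℝ is C¹, periodic (L(x+α,y+α) = L(x,y) for integer
vectors α) and coercive (L(x,y) → ∞ as |x-y| → ∞), then there is a
nondecreasing b : ℝ≥0 → ℝ≥0 with |∂_x L(x,y)|² ≤ b(|L(x,y)|). -/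
theorem gradient_bound_by_energy {M : ℕ} (hM : 1 ≤ M)
    (L : (Fin M → ℝ) → (Fin M → ℝ) → ℝ)
    (hC1 : ContDiff ℝ 1 (fun p : (Fin M → ℝ) × (Fin M → ℝ) => L p.1 p.2))
    (hper : ∀ (x y : Fin M → ℝ) (a : Fin M → ℤ),
      L (x + fun i => (a i : ℝ)) (y + fun i => (a i : ℝ)) = L x y)
    (hcoer : ∀ c : ℝ, ∃ R : ℝ, ∀ x y : Fin M → ℝ, R ≤ ‖x - y‖ → c ≤ L x y) :
    ∃ b : ℝ → ℝ, (∀ s, 0 ≤ s → 0 ≤ b s) ∧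
      (∀ s t, 0 ≤ s → s ≤ t → b s ≤ b t) ∧
      ∀ x y : Fin M → ℝ, ‖fderiv ℝ (fun z => L z y) x‖ ^ 2 ≤ b |L x y| := by
  classical
  set F : (Fin M → ℝ) × (Fin M → ℝ) → ℝ := fun p => L p.1 p.2 with hFdef
  have hFd : Differentiable ℝ F := hC1.differentiable one_ne_zero
  -- derivative formula for the partial map
  have hkey : ∀ x y : Fin M → ℝ, HasFDerivAt (fun z => L z y)
      ((fderiv ℝ F (x, y)).comp (ContinuousLinearMap.inl ℝ (Fin M → ℝ) (Fin M → ℝ))) x := by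
    intro x y
    have h1 : HasFDerivAt (fun z : Fin M → ℝ => (z, y))
        (ContinuousLinearMap.inl ℝ (Fin M → ℝ) (Fin M → ℝ)) x :=
      hasFDerivAt_prodMk_left x y
    exact ((hFd (x, y)).hasFDerivAt).comp x h1
  -- periodicity of the partial derivative
  have hper' : ∀ (x y : Fin M → ℝ) (a : Fin M → ℤ),
      fderiv ℝ (fun z => L z (y + fun i => (a i : ℝ))) (x + fun i => (a i : ℝ))
        = fderiv ℝ (fun z => L z y) x := by
    intro x y a
    set c : Fin M → ℝ := fun i => (a i : ℝ) with hc
    have h1 : HasFDerivAt (fun z : Fin M → ℝ => z - c)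
        (ContinuousLinearMap.id ℝ (Fin M → ℝ)) (x + c) := by
      simpa using (hasFDerivAt_id (𝕜 := ℝ) (x + c)).sub_const c
    have h0' : HasFDerivAt (fun z => L z y)
        ((fderiv ℝ F (x, y)).comp (ContinuousLinearMap.inl ℝ (Fin M → ℝ) (Fin M → ℝ)))
        ((x + c) - c) := by
      rw [add_sub_cancel_right]; exact hkey x y
    have h2 := h0'.comp (x + c) h1
    have heq : ((fun z => L z y) ∘ fun z : Fin M → ℝ => z - c) = fun z => L z (y + c) := by
      funext z
      have h := hper (z - c) y a
      rw [← hc] at h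
      rw [sub_add_cancel] at h
      simpa [Function.comp] using h.symm
    rw [heq] at h2
    rw [h2.fderiv, (hkey x y).fderiv]
    simp
  have hinl : ‖ContinuousLinearMap.inl ℝ (Fin M → ℝ) (Fin M → ℝ)‖ ≤ 1 := by
    refine ContinuousLinearMap.opNorm_le_bound _ zero_le_one fun z => ?_
    simp [Prod.norm_def]
  -- the candidate sets
  set S : ℝ → Set ℝ := fun s =>
    {r | ∃ x y : Fin M → ℝ, |L x y| ≤ s ∧ r = ‖fderiv ℝ (fun z => L z y) x‖ ^ 2} with hS
  have hbdd : ∀ s, BddAbove (S s) := by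
    intro s
    obtain ⟨R, hR⟩ := hcoer (s + 1)
    set R' : ℝ := max R 0 with hR'
    set K : Set ((Fin M → ℝ) × (Fin M → ℝ)) :=
      {p | p.1 ∈ Set.Icc (0 : Fin M → ℝ) 1 ∧ ‖p.1 - p.2‖ ≤ R'} with hK
    have hKclosed : IsClosed K := by
      have h1 : IsClosed ((Prod.fst ⁻¹' Set.Icc (0 : Fin M → ℝ) 1) :
          Set ((Fin M → ℝ) × (Fin M → ℝ))) := isClosed_Icc.preimage continuous_fst
      have h2 : IsClosed {p : (Fin M → ℝ) × (Fin M → ℝ) | ‖p.1 - p.2‖ ≤ R'} :=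
        isClosed_le ((continuous_fst.sub continuous_snd).norm) continuous_const
      exact h1.inter h2
    have hKbounded : Bornology.IsBounded K := by
      refine (Bornology.IsBounded.subset
        ((Metric.isBounded_closedBall (x := (0 : Fin M → ℝ)) (r := 1)).prod
          (Metric.isBounded_closedBall (x := (0 : Fin M → ℝ)) (r := 1 + R'))) ?_)
      rintro ⟨p1, p2⟩ ⟨hp1, hp2⟩
      rw [Set.mem_Icc] at hp1
      have h1 : ‖p1‖ ≤ 1 := by
        rw [pi_norm_le_iff_of_nonneg zero_le_one]
        intro i
        rw [Real.norm_eq_abs, abs_le]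
        have hl : (0 : ℝ) ≤ p1 i := hp1.1 i
        have hu : p1 i ≤ (1 : ℝ) := hp1.2 i
        exact ⟨by linarith, hu⟩
      constructor
      · simpa [Metric.mem_closedBall, dist_eq_norm] using h1
      · simp only [Metric.mem_closedBall, dist_eq_norm, sub_zero]
        calc ‖p2‖ = ‖p1 - (p1 - p2)‖ := by rw [sub_sub_cancel]
          _ ≤ ‖p1‖ + ‖p1 - p2‖ := norm_sub_le _ _
          _ ≤ 1 + R' := add_le_add h1 hp2
    have hKc : IsCompact K := Metric.isCompact_of_isClosed_isBounded hKclosed hKbounded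
    have hcont : Continuous (fderiv ℝ F) := hC1.continuous_fderiv one_ne_zero
    obtain ⟨C, hC⟩ := hKc.exists_bound_of_continuousOn hcont.continuousOn
    refine ⟨(max C 0) ^ 2, ?_⟩
    rintro r ⟨x, y, hxy, rfl⟩
    -- shift to fundamental domain
    set a : Fin M → ℤ := fun i => -⌊x i⌋ with ha
    set c : Fin M → ℝ := fun i => ((a i : ℤ) : ℝ) with hc
    set x' := x + c with hx'
    set y' := y + c with hy'
    have hx'mem : x' ∈ Set.Icc (0 : Fin M → ℝ) 1 := by
      constructor <;> intro i <;>
        simp only [hx', hc, ha, Pi.add_apply, Pi.zero_apply, Pi.one_apply, Int.cast_neg]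
      · have := Int.floor_le (x i); linarith
      · have := Int.lt_floor_add_one (x i); linarith
    have hxy_norm : ‖x - y‖ ≤ R' := by
      by_contra h
      push_neg at h
      have h1 : R ≤ ‖x - y‖ := le_trans (le_max_left _ _) h.le
      have h2 := hR x y h1
      have h3 := le_abs_self (L x y)
      linarith
    have hmem : (x', y') ∈ K := by
      refine ⟨hx'mem, ?_⟩
      have he : x' - y' = x - y := by rw [hx', hy']; abel
      rw [he]
      exact hxy_norm
    have hnorm : ‖fderiv ℝ (fun z => L z y) x‖ ≤ max C 0 := by
      have e1 : fderiv ℝ (fun z => L z y) x = fderiv ℝ (fun z => L z y') x' := by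
        rw [hx', hy', hc]
        exact (hper' x y a).symm
      rw [e1, (hkey x' y').fderiv]
      calc ‖(fderiv ℝ F (x', y')).comp (ContinuousLinearMap.inl ℝ (Fin M → ℝ) (Fin M → ℝ))‖
          ≤ ‖fderiv ℝ F (x', y')‖ * ‖ContinuousLinearMap.inl ℝ (Fin M → ℝ) (Fin M → ℝ)‖ :=
            ContinuousLinearMap.opNorm_comp_le _ _
        _ ≤ ‖fderiv ℝ F (x', y')‖ * 1 :=
            mul_le_mul_of_nonneg_left hinl (norm_nonneg _)
        _ = ‖fderiv ℝ F (x', y')‖ := mul_one _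
        _ ≤ C := hC _ hmem
        _ ≤ max C 0 := le_max_left _ _
    exact pow_le_pow_left₀ (norm_nonneg _) hnorm 2
  refine ⟨fun s => sSup (S s), ?_, ?_, ?_⟩
  · intro s _
    exact Real.sSup_nonneg (by rintro r ⟨x, y, _, rfl⟩; positivity)
  · intro s t _ hst
    show sSup (S s) ≤ sSup (S t)
    by_cases h : (S s).Nonempty
    · exact csSup_le_csSup (hbdd t) h (by rintro r ⟨x, y, hxy, rfl⟩; exact ⟨x, y, hxy.trans hst, rfl⟩)
    · rw [Set.not_nonempty_iff_eq_empty] at h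
      rw [h, Real.sSup_empty]
      exact Real.sSup_nonneg (by rintro r ⟨x, y, _, rfl⟩; positivity)
  · intro x y
    exact le_csSup (hbdd _) ⟨x, y, le_refl _, rfl⟩
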